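/- Key exchange identity in the proof of the Braided Wick Theorem. Let X and Y be objects of 𝒞 with morphisms ev : X⊗Y → 𝟙 and coev : 𝟙 → Y⊗X satisfying the zigzag (duality) identities, let γ : X → Y be an isomorphism, and set Z_2 := ev ∘ ψ_{Y,X} ∘ (id_Y ⊗ γ^{-1}) : Y^{⊗2} → 𝟙. Then for every n ≥ 2 and every morphism W : Y^{⊗(n-2)} → 𝟙 one has W ∘ (ev ⊗ id^{⊗(n-2)}) ∘ (id_X ⊗ [n-1]) ∘ (γ^{-1} ⊗ id^{⊗(n-1)}) ∘ ψ_{n-1,1} = (W ⊗ Z_2) ∘ ([n−1]′ ⊗ id_Y) as morphisms Y^{⊗n} → 𝟙 (identifying 𝟙⊗𝟙 ≅ 𝟙). -/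

import Mathlib

open CategoryTheory MonoidalCategory

universe v u

variable {C : Type u} [Category.{v} C] [MonoidalCategory C] [BraidedCategory C]
variable [Preadditive C] [MonoidalPreadditive C]

/-- The `n`-fold tensor power of an object, left-nested: `Y^{⊗0} = 𝟙_C`,
`Y^{⊗(n+1)} = Y^{⊗n} ⊗ Y`. -/
def TPow (Y : C) : ℕ → C
  | 0 => 𝟙_ C
  | n + 1 => TPow Y n ⊗ Y

/-- The braiding of the last two factors of `Y^{⊗(n+2)}` (coherences inserted). -/
def swapLast (Y : C) (n : ℕ) : TPow Y (n + 2) ⟶ TPow Y (n + 2) :=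
  (α_ (TPow Y n) Y Y).hom ≫ (𝟙 (TPow Y n) ⊗ₘ (β_ Y Y).hom) ≫ (α_ (TPow Y n) Y Y).inv

/-- `ψ_i : Y^{⊗n} → Y^{⊗n}`, the braiding of the `i`-th and `(i+1)`-st factors
(`1 ≤ i ≤ n-1`; junk identity outside this range). -/
def psiAt (Y : C) : (n : ℕ) → ℕ → (TPow Y n ⟶ TPow Y n)
  | 0, _ => 𝟙 _
  | 1, _ => 𝟙 _
  | n + 2, i => if i = n + 1 then swapLast Y n else psiAt Y (n + 1) i ⊗ₘ 𝟙 Y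

/-- The inverse braiding `ψ_i⁻¹` of the `i`-th and `(i+1)`-st factors. -/
def psiInvAt (Y : C) : (n : ℕ) → ℕ → (TPow Y n ⟶ TPow Y n)
  | 0, _ => 𝟙 _
  | 1, _ => 𝟙 _
  | n + 2, i => if i = n + 1 then
      (α_ (TPow Y n) Y Y).hom ≫ (𝟙 (TPow Y n) ⊗ₘ (β_ Y Y).inv) ≫ (α_ (TPow Y n) Y Y).inv
    else psiInvAt Y (n + 1) i ⊗ₘ 𝟙 Y

/-- `ψ_j ∘ ψ_{j-1} ∘ ⋯ ∘ ψ_1` read in application order: apply `ψ_j` first, …, `ψ_1` last;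
i.e. the composite `ψ_1∘ψ_2∘⋯∘ψ_j`. -/
def chainDesc (Y : C) (n : ℕ) : ℕ → (TPow Y n ⟶ TPow Y n)
  | 0 => 𝟙 _
  | j + 1 => psiAt Y n (j + 1) ≫ chainDesc Y n j

/-- The braided integer `[n] = Σ_{j=0}^{n-1} ψ_1∘ψ_2∘⋯∘ψ_j`. -/
def bint (Y : C) (n : ℕ) : TPow Y n ⟶ TPow Y n :=
  ∑ j ∈ Finset.range n, chainDesc Y n j

/-- `ψ_{n-1,1} = ψ_1∘ψ_2∘⋯∘ψ_{n-1}`. -/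
def psiLast (Y : C) (n : ℕ) : TPow Y n ⟶ TPow Y n := chainDesc Y n (n - 1)

/-- The composite `ψ_{n-1}⁻¹∘ψ_{n-2}⁻¹∘⋯∘ψ_{n-j}⁻¹` (apply `ψ_{n-j}⁻¹` first). -/
def chainInvDown (Y : C) (n : ℕ) : ℕ → (TPow Y n ⟶ TPow Y n)
  | 0 => 𝟙 _
  | j + 1 => psiInvAt Y n (n - (j + 1)) ≫ chainInvDown Y n j

/-- The braided integer `[n]′ = Σ_{j=0}^{n-1} ψ_{n-1}⁻¹∘ψ_{n-2}⁻¹∘⋯∘ψ_{n-j}⁻¹`. -/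
def bint' (Y : C) (n : ℕ) : TPow Y n ⟶ TPow Y n :=
  ∑ j ∈ Finset.range n, chainInvDown Y n j


/-- The coherence isomorphism `Y^{⊗(n+1)} ≅ Y ⊗ Y^{⊗n}` splitting off the first factor. -/
def splitIso (Y : C) : (n : ℕ) → (TPow Y (n + 1) ≅ Y ⊗ TPow Y n)
  | 0 => (λ_ Y) ≪≫ (ρ_ Y).symm
  | n + 1 => (whiskerRightIso (splitIso Y n) Y) ≪≫ α_ Y (TPow Y n) Y

/-- The right-hand side of the Gaussian recursion (without the final `Z_{n-2}`), for `n = m+2`: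
`(ev ⊗ id^{⊗(n-2)}) ∘ (id_X ⊗ [n-1]) ∘ (γ⁻¹ ⊗ id^{⊗(n-1)}) ∘ ψ_{n-1,1}`,
with the structural coherence isomorphisms inserted. -/
def gaussStep (X Y : C) (ev : X ⊗ Y ⟶ 𝟙_ C) (γ : X ≅ Y) (m : ℕ) :
    TPow Y (m + 2) ⟶ TPow Y m :=
  psiLast Y (m + 2) ≫
  (splitIso Y (m + 1)).hom ≫
  (γ.inv ⊗ₘ 𝟙 (TPow Y (m + 1))) ≫
  (𝟙 X ⊗ₘ bint Y (m + 1)) ≫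
  (𝟙 X ⊗ₘ (splitIso Y m).hom) ≫
  (α_ X Y (TPow Y m)).inv ≫
  (ev ⊗ₘ 𝟙 (TPow Y m)) ≫
  (λ_ (TPow Y m)).hom


open BraidedCategory

section Aux
variable {C : Type u} [Category.{v} C] [MonoidalCategory C] [BraidedCategory C]
variable [Preadditive C] [MonoidalPreadditive C]

lemma psiAt_pad (Y : C) (n i : ℕ) (h : i < n) :
    psiAt Y (n + 1) i = psiAt Y n i ⊗ₘ 𝟙 Y := by
  cases n with
  | zero => omega
  | succ p =>
    show psiAt Y (p + 2) i = _
    rw [psiAt]; exact if_neg (by omega : ¬ i = p + 1)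

lemma psiInvAt_pad (Y : C) (n i : ℕ) (h : i < n) :
    psiInvAt Y (n + 1) i = psiInvAt Y n i ⊗ₘ 𝟙 Y := by
  cases n with
  | zero => omega
  | succ p =>
    show psiInvAt Y (p + 2) i = _
    rw [psiInvAt]; exact if_neg (by omega : ¬ i = p + 1)

lemma psiAt_top (Y : C) (n : ℕ) : psiAt Y (n + 2) (n + 1) = swapLast Y n := by
  rw [psiAt]; exact if_pos rfl

lemma psiInvAt_top (Y : C) (n : ℕ) : psiInvAt Y (n + 2) (n + 1) =
    (α_ (TPow Y n) Y Y).hom ≫ (𝟙 (TPow Y n) ⊗ₘ (β_ Y Y).inv) ≫ (α_ (TPow Y n) Y Y).inv := by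
  rw [psiInvAt]; exact if_pos rfl

lemma chainDesc_zero (Y : C) (n : ℕ) : chainDesc Y n 0 = 𝟙 _ := rfl

lemma chainDesc_succ (Y : C) (n j : ℕ) :
    chainDesc Y n (j + 1) = psiAt Y n (j + 1) ≫ chainDesc Y n j := rfl

lemma chainInvDown_zero (Y : C) (n : ℕ) : chainInvDown Y n 0 = 𝟙 _ := rfl

lemma chainInvDown_succ (Y : C) (n j : ℕ) :
    chainInvDown Y n (j + 1) = psiInvAt Y n (n - (j + 1)) ≫ chainInvDown Y n j := rfl

lemma chainDesc_pad (Y : C) (n j : ℕ) (h : j < n) :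
    chainDesc Y (n + 1) j = chainDesc Y n j ⊗ₘ 𝟙 Y := by
  induction j with
  | zero => exact (MonoidalCategory.id_tensorHom_id _ _).symm
  | succ j ih =>
    rw [chainDesc_succ, chainDesc_succ, psiAt_pad Y n (j+1) h, ih (by omega)]
    have := MonoidalCategory.tensorHom_comp_tensorHom (psiAt Y n (j+1)) (𝟙 Y) (chainDesc Y n j) (𝟙 Y)
    rw [Category.comp_id] at this; exact this

end Aux
set_option linter.unusedSectionVars false
section Aux2
variable {C : Type u} [Category.{v} C] [MonoidalCategory C] [BraidedCategory C]
variable [Preadditive C] [MonoidalPreadditive C]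

lemma chainDesc_top_aux (A Y : C) (s : A ⊗ Y ≅ Y ⊗ A) :
    ((α_ A Y Y).hom ≫ A ◁ (β_ Y Y).hom ≫ (α_ A Y Y).inv) ≫ ((β_ A Y).hom ≫ s.inv ⊗ₘ 𝟙 Y) =
    ((α_ A Y Y).hom ≫ A ◁ (β_ Y Y).hom ≫ (α_ A Y Y).inv ≫ (β_ A Y).hom ▷ Y ≫
      (α_ Y A Y).hom) ≫ (whiskerRightIso s Y ≪≫ α_ Y A Y).inv := by
  simp

lemma chainDesc_top (Y : C) (n : ℕ) :
    chainDesc Y (n + 1) n = (β_ (TPow Y n) Y).hom ≫ (splitIso Y n).inv := by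
  induction n with
  | zero =>
    show 𝟙 _ = _
    rw [show (β_ (TPow Y 0) Y).hom = (β_ (𝟙_ C) Y).hom from rfl, braiding_tensorUnit_left]
    simp [splitIso]
    exact (Iso.hom_inv_id (λ_ Y ≪≫ (ρ_ Y).symm)).symm
  | succ n ih =>
    rw [show chainDesc Y (n+2) (n+1) = psiAt Y (n+2) (n+1) ≫ chainDesc Y (n+2) n from rfl,
      psiAt_top, chainDesc_pad Y (n+1) n (Nat.lt_succ_self n), ih]
    rw [show (β_ (TPow Y (n+1)) Y).hom = (β_ (TPow Y n ⊗ Y) Y).hom from rfl,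
      braiding_tensor_left_hom]
    simp [swapLast, splitIso, MonoidalCategory.tensorHom_id, MonoidalCategory.id_tensorHom,
      MonoidalCategory.comp_whiskerRight]
    exact chainDesc_top_aux (TPow Y n) Y (splitIso Y n)

/-- `ξ j k`: the block form of `chainDesc Y (j+k+1) j ≫ (splitIso Y (j+k)).hom`. -/
def xiChain (Y : C) (j : ℕ) : (k : ℕ) → (TPow Y (j + k + 1) ⟶ Y ⊗ TPow Y (j + k))
  | 0 => (β_ (TPow Y j) Y).hom
  | k + 1 => (xiChain Y j k ▷ Y) ≫ (α_ Y (TPow Y (j + k)) Y).hom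

lemma chainDesc_xi (Y : C) (j k : ℕ) :
    chainDesc Y (j + k + 1) j ≫ (splitIso Y (j + k)).hom = xiChain Y j k := by
  induction k with
  | zero =>
    show chainDesc Y (j + 1) j ≫ (splitIso Y j).hom = _
    rw [chainDesc_top]
    exact (Category.assoc _ _ _).trans (by simp; exact Category.comp_id _)
  | succ k ih =>
    show chainDesc Y ((j + k + 1) + 1) j ≫ (splitIso Y ((j + k) + 1)).hom = _
    rw [chainDesc_pad Y (j + k + 1) j (by omega)]
    rw [show (splitIso Y ((j+k)+1)).hom
        = ((splitIso Y (j+k)).hom ▷ Y) ≫ (α_ Y (TPow Y (j+k)) Y).hom from rfl]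
    rw [MonoidalCategory.tensorHom_id]
    erw [← Category.assoc, ← MonoidalCategory.comp_whiskerRight, ih]
    rfl

/-- reversed recursion for `chainInvDown`. -/
lemma chainInvDown_rec (Y : C) (n k : ℕ) (h : k < n) :
    chainInvDown Y (n + 1) (k + 1)
      = (chainInvDown Y n k ⊗ₘ 𝟙 Y) ≫ psiInvAt Y (n + 1) n := by
  induction k with
  | zero =>
    rw [chainInvDown_succ, chainInvDown_zero, chainInvDown_zero,
      show n + 1 - 1 = n from rfl]
    simp [MonoidalCategory.id_tensorHom_id]
    exact (Category.id_comp _).symm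
  | succ k ih =>
    rw [chainInvDown_succ, ih (by omega), chainInvDown_succ,
      show n + 1 - (k + 1 + 1) = n - (k + 1) from Nat.succ_sub_succ n (k+1),
      psiInvAt_pad Y n (n - (k+1)) (by omega)]
    erw [← Category.assoc, MonoidalCategory.tensorHom_comp_tensorHom, Category.comp_id]
    rfl

/-- `ζ j k`: block form of `chainInvDown Y (j+k+1) k`. -/
def zetaChain (Y : C) (j : ℕ) : (k : ℕ) → (TPow Y (j + k + 1) ⟶ TPow Y (j + k + 1))
  | 0 => 𝟙 _
  | k + 1 => (zetaChain Y j k ▷ Y) ≫ (α_ (TPow Y (j + k)) Y Y).hom ≫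
      ((TPow Y (j + k)) ◁ (β_ Y Y).inv) ≫ (α_ (TPow Y (j + k)) Y Y).inv

lemma chainInvDown_zeta (Y : C) (j k : ℕ) :
    chainInvDown Y (j + k + 1) k = zetaChain Y j k := by
  induction k with
  | zero => rfl
  | succ k ih =>
    show chainInvDown Y ((j + k + 1) + 1) (k + 1) = _
    rw [chainInvDown_rec Y (j + k + 1) k (by omega), ih, psiInvAt_top]
    simp [zetaChain, MonoidalCategory.tensorHom_id, MonoidalCategory.id_tensorHom]
    rfl

end Aux2
set_option linter.unusedSectionVars false
section Aux3
variable {C : Type u} [Category.{v} C] [MonoidalCategory C] [BraidedCategory C]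
variable [Preadditive C] [MonoidalPreadditive C]

lemma core0 (A X Y : C) (ev : X ⊗ Y ⟶ 𝟙_ C) (g : Y ⟶ X) :
    (β_ (A ⊗ Y) Y).hom ≫ (g ▷ (A ⊗ Y)) ≫ (X ◁ (β_ A Y).hom) ≫ (α_ X Y A).inv ≫
      (ev ▷ A) ≫ (λ_ A).hom
    = (α_ A Y Y).hom ≫ (A ◁ ((Y ◁ g) ≫ (β_ Y X).hom ≫ ev)) ≫ (ρ_ A).hom := by
  rw [braiding_tensor_left_hom]
  simp only [Category.assoc]
  rw [← associator_naturality_left_assoc g A Y]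
  rw [← comp_whiskerRight_assoc (β_ A Y).hom (g ▷ A) Y]
  rw [← braiding_naturality_right A g]
  rw [comp_whiskerRight_assoc]
  have h5 : (β_ A X).hom ▷ Y ≫ (α_ X A Y).hom ≫ (X ◁ (β_ A Y).hom) ≫ (α_ X Y A).inv
      = (α_ A X Y).hom ≫ (β_ A (X ⊗ Y)).hom := by
    rw [braiding_tensor_right_hom, Iso.hom_inv_id_assoc]
  rw [reassoc_of% h5]
  rw [← braiding_naturality_right_assoc A ev]
  rw [braiding_leftUnitor]
  rw [associator_naturality_middle_assoc]
  simp only [← MonoidalCategory.whiskerLeft_comp_assoc, ← MonoidalCategory.whiskerLeft_comp]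
  rw [braiding_naturality_right_assoc]
  simp [Iso.inv_hom_id_assoc, MonoidalCategory.whiskerLeft_comp]
set_option linter.unusedSectionVars false
section Aux4
variable {C : Type u} [Category.{v} C] [MonoidalCategory C] [BraidedCategory C]
variable [Preadditive C] [MonoidalPreadditive C]

lemma LC0 (Y : C) (f : Y ⊗ Y ⟶ 𝟙_ C) :
    ((β_ Y Y).inv ▷ Y) ≫ (α_ Y Y Y).hom ≫ (Y ◁ f) ≫ (ρ_ Y).hom
    = (α_ Y Y Y).hom ≫ (Y ◁ (β_ Y Y).hom) ≫ (α_ Y Y Y).inv ≫ (f ▷ Y) ≫ (λ_ Y).hom := by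
  rw [← braiding_leftUnitor Y]
  rw [braiding_naturality_right_assoc Y f]
  rw [braiding_tensor_right_hom]
  simp only [Category.assoc, Iso.hom_inv_id_assoc, Iso.inv_hom_id_assoc]
  rw [← comp_whiskerRight_assoc, Iso.inv_hom_id, MonoidalCategory.id_whiskerRight]
  simp
set_option linter.unusedSectionVars false
section Aux5
variable {C : Type u} [Category.{v} C] [MonoidalCategory C] [BraidedCategory C]
variable [Preadditive C] [MonoidalPreadditive C]

lemma LCS (S Y : C) (f : Y ⊗ Y ⟶ 𝟙_ C) :
    (((α_ S Y Y).hom ≫ (S ◁ (β_ Y Y).inv) ≫ (α_ S Y Y).inv) ▷ Y) ≫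
      (α_ (S ⊗ Y) Y Y).hom ≫ ((S ⊗ Y) ◁ f) ≫ (ρ_ (S ⊗ Y)).hom
    = (α_ (S ⊗ Y) Y Y).hom ≫ ((S ⊗ Y) ◁ (β_ Y Y).hom) ≫ (α_ (S ⊗ Y) Y Y).inv ≫
      (((α_ S Y Y).hom ≫ (S ◁ f) ≫ (ρ_ S).hom) ▷ Y) := by
  have e1 : (((α_ S Y Y).hom ≫ (S ◁ (β_ Y Y).inv) ≫ (α_ S Y Y).inv) ▷ Y) ≫
      (α_ (S ⊗ Y) Y Y).hom ≫ ((S ⊗ Y) ◁ f) ≫ (ρ_ (S ⊗ Y)).hom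
      = ((α_ S Y Y).hom ▷ Y) ≫ (α_ S (Y ⊗ Y) Y).hom ≫
        (S ◁ (((β_ Y Y).inv ▷ Y) ≫ (α_ Y Y Y).hom ≫ (Y ◁ f) ≫ (ρ_ Y).hom)) := by
    coherence
  have e2 : (α_ (S ⊗ Y) Y Y).hom ≫ ((S ⊗ Y) ◁ (β_ Y Y).hom) ≫ (α_ (S ⊗ Y) Y Y).inv ≫
      (((α_ S Y Y).hom ≫ (S ◁ f) ≫ (ρ_ S).hom) ▷ Y)
      = ((α_ S Y Y).hom ▷ Y) ≫ (α_ S (Y ⊗ Y) Y).hom ≫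
        (S ◁ ((α_ Y Y Y).hom ≫ (Y ◁ (β_ Y Y).hom) ≫ (α_ Y Y Y).inv ≫ (f ▷ Y) ≫ (λ_ Y).hom)) := by
    coherence
  rw [e1, e2, LC0]
set_option linter.unusedSectionVars false
section Aux6
variable {C : Type u} [Category.{v} C] [MonoidalCategory C] [BraidedCategory C]
variable [Preadditive C] [MonoidalPreadditive C]

/-- The per-term LHS morphism (with trivial `W`). -/
def Fmor (X Y : C) (ev : X ⊗ Y ⟶ 𝟙_ C) (g : Y ⟶ X) (j k : ℕ) :
    TPow Y (j + k + 2) ⟶ TPow Y (j + k) :=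
  (β_ (TPow Y (j + k + 1)) Y).hom ≫ (g ▷ TPow Y (j + k + 1)) ≫ (X ◁ xiChain Y j k) ≫
    (α_ X Y (TPow Y (j + k))).inv ≫ (ev ▷ TPow Y (j + k)) ≫ (λ_ (TPow Y (j + k))).hom

/-- The per-term RHS morphism (with trivial `W`). -/
def Gmor (X Y : C) (ev : X ⊗ Y ⟶ 𝟙_ C) (g : Y ⟶ X) (j k : ℕ) :
    TPow Y (j + k + 2) ⟶ TPow Y (j + k) :=
  (zetaChain Y j k ▷ Y) ≫ (α_ (TPow Y (j + k)) Y Y).hom ≫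
    (TPow Y (j + k) ◁ ((Y ◁ g) ≫ (β_ Y X).hom ≫ ev)) ≫ (ρ_ (TPow Y (j + k))).hom

lemma keyF_aux (X Y A B : C) (ev : X ⊗ Y ⟶ 𝟙_ C) (g : Y ⟶ X) (x : B ⟶ Y ⊗ A) :
    (β_ (B ⊗ Y) Y).hom ≫ (g ▷ (B ⊗ Y)) ≫ (X ◁ ((x ▷ Y) ≫ (α_ Y A Y).hom)) ≫
      (α_ X Y (A ⊗ Y)).inv ≫ (ev ▷ (A ⊗ Y)) ≫ (λ_ (A ⊗ Y)).hom
    = (α_ B Y Y).hom ≫ (B ◁ (β_ Y Y).hom) ≫ (α_ B Y Y).inv ≫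
      (((β_ B Y).hom ≫ (g ▷ B) ≫ (X ◁ x) ≫ (α_ X Y A).inv ≫ (ev ▷ A) ≫ (λ_ A).hom) ▷ Y) := by
  rw [braiding_tensor_left_hom]
  coherence

lemma keyF (X Y : C) (ev : X ⊗ Y ⟶ 𝟙_ C) (g : Y ⟶ X) (j k : ℕ) :
    Fmor X Y ev g j (k + 1)
      = (α_ (TPow Y (j + k + 1)) Y Y).hom ≫ (TPow Y (j + k + 1) ◁ (β_ Y Y).hom) ≫
        (α_ (TPow Y (j + k + 1)) Y Y).inv ≫ (Fmor X Y ev g j k ▷ Y) := by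
  rw [show Fmor X Y ev g j (k + 1)
      = (β_ (TPow Y (j + k + 1) ⊗ Y) Y).hom ≫ (g ▷ (TPow Y (j + k + 1) ⊗ Y)) ≫
        (X ◁ ((xiChain Y j k ▷ Y) ≫ (α_ Y (TPow Y (j + k)) Y).hom)) ≫
        (α_ X Y (TPow Y (j + k) ⊗ Y)).inv ≫ (ev ▷ (TPow Y (j + k) ⊗ Y)) ≫
        (λ_ (TPow Y (j + k) ⊗ Y)).hom from rfl]
  exact keyF_aux X Y (TPow Y (j + k)) (TPow Y (j + k + 1)) ev g (xiChain Y j k)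
end Aux6
set_option linter.unusedSectionVars false
section Aux7
variable {C : Type u} [Category.{v} C] [MonoidalCategory C] [BraidedCategory C]
variable [Preadditive C] [MonoidalPreadditive C]

lemma keyG_aux (A X Y : C) (ev : X ⊗ Y ⟶ 𝟙_ C) (g : Y ⟶ X) (z : A ⊗ Y ⟶ A ⊗ Y) :
    (((z ▷ Y) ≫ ((α_ A Y Y).hom ≫ (A ◁ (β_ Y Y).inv) ≫ (α_ A Y Y).inv)) ▷ Y) ≫
      (α_ (A ⊗ Y) Y Y).hom ≫ ((A ⊗ Y) ◁ ((Y ◁ g) ≫ (β_ Y X).hom ≫ ev)) ≫ (ρ_ (A ⊗ Y)).hom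
    = (α_ (A ⊗ Y) Y Y).hom ≫ ((A ⊗ Y) ◁ (β_ Y Y).hom) ≫ (α_ (A ⊗ Y) Y Y).inv ≫
      (((z ▷ Y) ≫ (α_ A Y Y).hom ≫ (A ◁ ((Y ◁ g) ≫ (β_ Y X).hom ≫ ev)) ≫ (ρ_ A).hom) ▷ Y) := by
  rw [MonoidalCategory.comp_whiskerRight, Category.assoc]
  rw [LCS A Y ((Y ◁ g) ≫ (β_ Y X).hom ≫ ev)]
  have hnat : z ▷ Y ▷ Y ≫ (α_ (A ⊗ Y) Y Y).hom
      = (α_ (A ⊗ Y) Y Y).hom ≫ z ▷ (Y ⊗ Y) :=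
    associator_naturality_left _ Y Y
  have hexch : (A ⊗ Y) ◁ (β_ Y Y).hom ≫ z ▷ (Y ⊗ Y)
      = z ▷ (Y ⊗ Y) ≫ (A ⊗ Y) ◁ (β_ Y Y).hom :=
    whisker_exchange _ _
  have hinv : z ▷ (Y ⊗ Y) ≫ (α_ (A ⊗ Y) Y Y).inv
      = (α_ (A ⊗ Y) Y Y).inv ≫ z ▷ Y ▷ Y :=
    associator_inv_naturality_left _ Y Y
  rw [reassoc_of% hnat, ← reassoc_of% hexch, reassoc_of% hinv]
  simp only [MonoidalCategory.comp_whiskerRight, Category.assoc]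

lemma keyG (X Y : C) (ev : X ⊗ Y ⟶ 𝟙_ C) (g : Y ⟶ X) (j k : ℕ) :
    Gmor X Y ev g j (k + 1)
      = (α_ (TPow Y (j + k) ⊗ Y) Y Y).hom ≫ ((TPow Y (j + k) ⊗ Y) ◁ (β_ Y Y).hom) ≫
        (α_ (TPow Y (j + k) ⊗ Y) Y Y).inv ≫ (Gmor X Y ev g j k ▷ Y) := by
  show (((zetaChain Y j k ▷ Y) ≫ ((α_ (TPow Y (j + k)) Y Y).hom ≫
        ((TPow Y (j + k)) ◁ (β_ Y Y).inv) ≫ (α_ (TPow Y (j + k)) Y Y).inv)) ▷ Y) ≫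
      (α_ (TPow Y (j + k) ⊗ Y) Y Y).hom ≫
      ((TPow Y (j + k) ⊗ Y) ◁ ((Y ◁ g) ≫ (β_ Y X).hom ≫ ev)) ≫
      (ρ_ (TPow Y (j + k) ⊗ Y)).hom = _
  exact keyG_aux (TPow Y (j + k)) X Y ev g (zetaChain Y j k)
end Aux7
set_option linter.unusedSectionVars false
section Aux8
variable {C : Type u} [Category.{v} C] [MonoidalCategory C] [BraidedCategory C]
variable [Preadditive C] [MonoidalPreadditive C]

lemma KLcore (X Y : C) (ev : X ⊗ Y ⟶ 𝟙_ C) (g : Y ⟶ X) (j k : ℕ) :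
    Fmor X Y ev g j k = Gmor X Y ev g j k := by
  induction k with
  | zero =>
    have h0 : Gmor X Y ev g j 0 = (α_ (TPow Y j) Y Y).hom ≫
        (TPow Y j ◁ ((Y ◁ g) ≫ (β_ Y X).hom ≫ ev)) ≫ (ρ_ (TPow Y j)).hom := by
      show ((𝟙 (TPow Y (j + 0 + 1)) ▷ Y) ≫ _ ≫ _ ≫ _ : _) = _
      simp
      rfl
    rw [h0]
    exact core0 (TPow Y j) X Y ev g
  | succ k ih =>
    rw [keyF, keyG, ih]
    rfl
end Aux8
set_option linter.unusedSectionVars false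
section Aux9
variable {C : Type u} [Category.{v} C] [MonoidalCategory C] [BraidedCategory C]
variable [Preadditive C] [MonoidalPreadditive C]

lemma sum_reflect_eq {M : Type*} [AddCommMonoid M] (n : ℕ) (F G : ℕ → M)
    (h : ∀ j, j < n → F j = G (n - 1 - j)) :
    ∑ j ∈ Finset.range n, F j = ∑ j ∈ Finset.range n, G j := by
  rw [← Finset.sum_range_reflect G n]
  exact Finset.sum_congr rfl (fun j hj => h j (Finset.mem_range.mp hj))

lemma perterm (X Y : C) (ev : X ⊗ Y ⟶ 𝟙_ C) (g : Y ⟶ X) (j k : ℕ)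
    (W : TPow Y (j + k) ⟶ 𝟙_ C) :
    (β_ (TPow Y (j + k + 1)) Y).hom ≫ (g ▷ TPow Y (j + k + 1)) ≫
      (X ◁ chainDesc Y (j + k + 1) j) ≫ (X ◁ (splitIso Y (j + k)).hom) ≫
      (α_ X Y (TPow Y (j + k))).inv ≫ (ev ▷ TPow Y (j + k)) ≫
      (λ_ (TPow Y (j + k))).hom ≫ W
    = (chainInvDown Y (j + k + 1) k ▷ Y) ≫ (α_ (TPow Y (j + k)) Y Y).hom ≫
      (W ⊗ₘ ((Y ◁ g) ≫ (β_ Y X).hom ≫ ev)) ≫ (λ_ (𝟙_ C)).hom := by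
  rw [← MonoidalCategory.whiskerLeft_comp_assoc, chainDesc_xi]
  rw [chainInvDown_zeta]
  have hL : (β_ (TPow Y (j + k + 1)) Y).hom ≫ (g ▷ TPow Y (j + k + 1)) ≫
      (X ◁ xiChain Y j k) ≫ (α_ X Y (TPow Y (j + k))).inv ≫ (ev ▷ TPow Y (j + k)) ≫
      (λ_ (TPow Y (j + k))).hom ≫ W = Fmor X Y ev g j k ≫ W := by
    simp only [Fmor, Category.assoc]
    erw [Category.assoc, Category.assoc, Category.assoc, Category.assoc, Category.assoc]
    rfl
  have hR : (zetaChain Y j k ▷ Y) ≫ (α_ (TPow Y (j + k)) Y Y).hom ≫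
      (W ⊗ₘ ((Y ◁ g) ≫ (β_ Y X).hom ≫ ev)) ≫ (λ_ (𝟙_ C)).hom
      = Gmor X Y ev g j k ≫ W := by
    rw [MonoidalCategory.tensorHom_def' W ((Y ◁ g) ≫ (β_ Y X).hom ≫ ev)]
    rw [Category.assoc, unitors_equal, rightUnitor_naturality]
    simp only [Gmor, Category.assoc]
    erw [Category.assoc, Category.assoc, Category.assoc]
    rfl
  rw [hL, hR, KLcore]
end Aux9

/-- the key exchange identity in the proof of the Braided Wick Theorem:
for `n = m + 2 ≥ 2` and any `W : Y^{⊗(n-2)} → 𝟙`,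
`W ∘ (ev ⊗ id^{⊗(n-2)}) ∘ (id_X ⊗ [n-1]) ∘ (γ⁻¹ ⊗ id^{⊗(n-1)}) ∘ ψ_{n-1,1}
  = (W ⊗ Z₂) ∘ ([n−1]′ ⊗ id_Y)`,
where `Z₂ = ev ∘ ψ_{Y,X} ∘ (id_Y ⊗ γ⁻¹)` (with `𝟙 ⊗ 𝟙 ≅ 𝟙` and coherences inserted). -/
theorem braided_wick_exchange
    (X Y : C) (ev : X ⊗ Y ⟶ 𝟙_ C) (coev : 𝟙_ C ⟶ Y ⊗ X)
    (hzig1 : (ρ_ X).inv ≫ (𝟙 X ⊗ₘ coev) ≫ (α_ X Y X).inv ≫ (ev ⊗ₘ 𝟙 X) ≫ (λ_ X).hom = 𝟙 X)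
    (hzig2 : (λ_ Y).inv ≫ (coev ⊗ₘ 𝟙 Y) ≫ (α_ Y X Y).hom ≫ (𝟙 Y ⊗ₘ ev) ≫ (ρ_ Y).hom = 𝟙 Y)
    (γ : X ≅ Y)
    (m : ℕ) (W : TPow Y m ⟶ 𝟙_ C) :
    gaussStep X Y ev γ m ≫ W =
      (bint' Y (m + 1) ⊗ₘ 𝟙 Y) ≫
      (α_ (TPow Y m) Y Y).hom ≫
      (W ⊗ₘ ((𝟙 Y ⊗ₘ γ.inv) ≫ (β_ Y X).hom ≫ ev)) ≫
      (λ_ (𝟙_ C)).hom := by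
  simp only [gaussStep]
  rw [show psiLast Y (m + 2) = chainDesc Y (m + 2) (m + 1) from rfl]
  rw [show chainDesc Y (m + 2) (m + 1)
      = (β_ (TPow Y (m + 1)) Y).hom ≫ (splitIso Y (m + 1)).inv from chainDesc_top Y (m + 1)]
  simp only [Category.assoc, Iso.inv_hom_id_assoc, MonoidalCategory.tensorHom_id,
    MonoidalCategory.id_tensorHom]
  simp only [bint, bint', CategoryTheory.whiskerLeft_sum,
    CategoryTheory.sum_whiskerRight, Preadditive.sum_comp, Preadditive.comp_sum]
  erw [Category.assoc, Category.assoc, Preadditive.sum_comp, Preadditive.comp_sum,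
    Preadditive.comp_sum]
  apply sum_reflect_eq
  intro i hi
  obtain ⟨k, rfl⟩ : ∃ k, m = i + k := ⟨m - i, by omega⟩
  rw [show i + k + 1 - 1 - i = k from by omega]
  erw [Category.assoc (splitIso Y (i + k + 1)).hom, Iso.inv_hom_id_assoc]
  erw [Category.assoc, Category.assoc, Category.assoc, Category.assoc, Category.assoc]
  exact perterm X Y ev γ.inv i k W
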